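/- Fix σ > 0 and integer d ≥ 1. Define F(ζ) = ln(1 + d·φ_σ(exp ζ)) for ζ ∈ ℝ, where φ_σ(x) = (2/√(2π)) ∫₀^{x/(2σ)} e^{−t²/2} dt. Then F''(ζ) < 0 for all ζ > ln(2σ·r(√(2π)/(2d))), i.e., F is strictly concave on that interval, where r(α) is the unique nonnegative zero of f(ζ,α) = (1−ζ²)(α + ∫₀^ζ e^{−t²/2} dt) − ζ e^{−ζ²/2}. -/

import Mathlib

noncomputable def phi (σ ζ : ℝ) : ℝ :=
  (2 / Real.sqrt (2 * Real.pi)) * ∫ t in (0:ℝ)..(ζ / (2 * σ)), Real.exp (-t ^ 2 / 2)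

noncomputable def f (ζ α : ℝ) : ℝ :=
  (1 - ζ ^ 2) * (α + ∫ t in (0:ℝ)..ζ, Real.exp (-t ^ 2 / 2)) - ζ * Real.exp (-ζ ^ 2 / 2)

noncomputable def F (σ : ℝ) (d : ℕ) (ζ : ℝ) : ℝ :=
  Real.log (1 + (d : ℝ) * phi σ (Real.exp ζ))

namespace Stmt15Aux

noncomputable def I (x : ℝ) : ℝ := ∫ t in (0:ℝ)..x, Real.exp (-t ^ 2 / 2)

lemma contInt : Continuous fun t : ℝ => Real.exp (-t ^ 2 / 2) := by fun_prop

lemma hasDerivAt_I (x : ℝ) : HasDerivAt I (Real.exp (-x ^ 2 / 2)) x :=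
  (contInt.integral_hasStrictDerivAt 0 x).hasDerivAt

lemma I_nonneg {x : ℝ} (hx : 0 ≤ x) : 0 ≤ I x :=
  intervalIntegral.integral_nonneg hx (fun t _ => (Real.exp_pos _).le)

lemma hasDerivAt_f (α x : ℝ) :
    HasDerivAt (fun ζ => f ζ α) (-2 * x * (α + I x)) x := by
  have h1 : HasDerivAt (fun ζ : ℝ => 1 - ζ ^ 2) (-(2 * x)) x := by
    simpa using ((hasDerivAt_pow 2 x).const_sub 1)
  have h3 : HasDerivAt (fun ζ : ℝ => α + I ζ) (Real.exp (-x ^ 2 / 2)) x :=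
    (hasDerivAt_I x).const_add α
  have hinner : HasDerivAt (fun ζ : ℝ => -ζ ^ 2 / 2) (-(2 * x) / 2) x := by
    simpa using ((hasDerivAt_pow 2 x).neg.div_const 2)
  have hexp : HasDerivAt (fun ζ : ℝ => Real.exp (-ζ ^ 2 / 2))
      (Real.exp (-x ^ 2 / 2) * (-(2 * x) / 2)) x := hinner.exp
  have h5 : HasDerivAt (fun ζ : ℝ => ζ * Real.exp (-ζ ^ 2 / 2))
      (1 * Real.exp (-x ^ 2 / 2) + x * (Real.exp (-x ^ 2 / 2) * (-(2 * x) / 2))) x :=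
    (hasDerivAt_id x).mul hexp
  have := (h1.mul h3).sub h5
  refine this.congr_deriv ?_
  ring

lemma f_strictAnti {α : ℝ} (hα : 0 < α) : StrictAntiOn (fun ζ => f ζ α) (Set.Ici 0) := by
  apply strictAntiOn_of_deriv_neg (convex_Ici 0)
  · exact (Differentiable.continuous fun x => (hasDerivAt_f α x).differentiableAt).continuousOn
  · intro x hx
    rw [interior_Ici] at hx
    rw [(hasDerivAt_f α x).deriv]
    have hx0 : (0:ℝ) < x := hx
    have h1 : 0 < α + I x := add_pos_of_pos_of_nonneg hα (I_nonneg (le_of_lt hx0))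
    nlinarith [mul_pos hx0 h1]

lemma alg (D C A E U II : ℝ) (h : D * C * A = 1) :
    D * C * (E * U) * (1 - U ^ 2) * (1 + D * (C * II)) -
      D * (C * (E * U)) * (D * (C * (E * U))) =
    (D * C) ^ 2 * (U * E) * ((1 - U ^ 2) * (A + II) - U * E) := by
  linear_combination (-(D * C * E * U * (1 - U ^ 2))) * h

end Stmt15Aux

theorem stmt15 (σ : ℝ) (hσ : 0 < σ) (d : ℕ) (hd : 1 ≤ d)
    (rα : ℝ) (hr0 : 0 ≤ rα) (hrz : f rα (Real.sqrt (2 * Real.pi) / (2 * d)) = 0) :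
    (∀ ζ : ℝ, Real.log (2 * σ * rα) < ζ → deriv (deriv (F σ d)) ζ < 0) ∧
    StrictConcaveOn ℝ (Set.Ioi (Real.log (2 * σ * rα))) (F σ d) := by
  open Stmt15Aux in
  have hsqrt : 0 < Real.sqrt (2 * Real.pi) := Real.sqrt_pos.mpr (by positivity)
  set α : ℝ := Real.sqrt (2 * Real.pi) / (2 * d) with hαdef
  have hdpos : (0:ℝ) < d := by exact_mod_cast hd
  have hα : 0 < α := by positivity
  set c : ℝ := 2 / Real.sqrt (2 * Real.pi) with hcdef
  have hc : 0 < c := by positivity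
  have hdcα : (d : ℝ) * c * α = 1 := by
    rw [hcdef, hαdef]
    field_simp
  -- rα > 0
  have hrpos : 0 < rα := by
    rcases lt_or_eq_of_le hr0 with h | h
    · exact h
    · exfalso
      rw [← h] at hrz
      simp [f, intervalIntegral.integral_same] at hrz
      rw [hrz] at hα
      exact lt_irrefl 0 hα
  -- the function u
  set u : ℝ → ℝ := fun ζ => Real.exp ζ / (2 * σ) with hudef
  have hupos : ∀ ζ, 0 < u ζ := fun ζ => by positivity
  have hu : ∀ ζ, HasDerivAt u (u ζ) ζ := fun ζ => (Real.hasDerivAt_exp ζ).div_const (2 * σ)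
  -- G and its derivative
  set G : ℝ → ℝ := fun ζ => 1 + (d : ℝ) * phi σ (Real.exp ζ) with hGdef
  set G' : ℝ → ℝ := fun ζ => (d : ℝ) * (c * (Real.exp (-(u ζ) ^ 2 / 2) * u ζ)) with hG'def
  have hGeq : ∀ ζ, G ζ = 1 + (d : ℝ) * (c * Stmt15Aux.I (u ζ)) := fun ζ => rfl
  have hGpos : ∀ ζ, 0 < G ζ := by
    intro ζ
    rw [hGeq]
    have := Stmt15Aux.I_nonneg (le_of_lt (hupos ζ))
    nlinarith
  have hG : ∀ ζ, HasDerivAt G (G' ζ) ζ := by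
    intro ζ
    have h1 : HasDerivAt (fun ζ => Stmt15Aux.I (u ζ)) (Real.exp (-(u ζ) ^ 2 / 2) * u ζ) ζ :=
      (Stmt15Aux.hasDerivAt_I (u ζ)).comp ζ (hu ζ)
    exact ((h1.const_mul c).const_mul (d : ℝ)).const_add 1
  have hF : ∀ ζ, HasDerivAt (F σ d) (G' ζ / G ζ) ζ := by
    intro ζ
    exact (hG ζ).log (ne_of_gt (hGpos ζ))
  have hderivF : deriv (F σ d) = fun ζ => G' ζ / G ζ := funext fun ζ => (hF ζ).deriv
  -- derivative of G'
  set G'' : ℝ → ℝ := fun ζ => (d : ℝ) * c * (Real.exp (-(u ζ) ^ 2 / 2) * u ζ) * (1 - (u ζ) ^ 2)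
    with hG''def
  have hG' : ∀ ζ, HasDerivAt G' (G'' ζ) ζ := by
    intro ζ
    have hsq : HasDerivAt (fun ζ => (u ζ) ^ 2) (2 * u ζ ^ 1 * u ζ) ζ := (hu ζ).pow 2
    have hinner : HasDerivAt (fun ζ => -(u ζ) ^ 2 / 2) (-(2 * u ζ ^ 1 * u ζ) / 2) ζ :=
      hsq.neg.div_const 2
    have hexp : HasDerivAt (fun ζ => Real.exp (-(u ζ) ^ 2 / 2))
        (Real.exp (-(u ζ) ^ 2 / 2) * (-(2 * u ζ ^ 1 * u ζ) / 2)) ζ := hinner.exp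
    have hmul := hexp.mul (hu ζ)
    have := (hmul.const_mul c).const_mul (d : ℝ)
    refine this.congr_deriv ?_
    ring
  -- second derivative
  have h2deriv : ∀ ζ, deriv (deriv (F σ d)) ζ =
      (G'' ζ * G ζ - G' ζ * G' ζ) / (G ζ) ^ 2 := by
    intro ζ
    rw [hderivF]
    exact ((hG' ζ).div (hG ζ) (ne_of_gt (hGpos ζ))).deriv
  -- main negativity claim
  have key : ∀ ζ : ℝ, Real.log (2 * σ * rα) < ζ → deriv (deriv (F σ d)) ζ < 0 := by
    intro ζ hζ
    have h2σr : 0 < 2 * σ * rα := by positivity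
    have hexpζ : 2 * σ * rα < Real.exp ζ := by
      calc 2 * σ * rα = Real.exp (Real.log (2 * σ * rα)) := (Real.exp_log h2σr).symm
        _ < Real.exp ζ := Real.exp_lt_exp.mpr hζ
    have hvr : rα < u ζ := by
      rw [hudef]
      rw [lt_div_iff₀ (by positivity : (0:ℝ) < 2 * σ)]
      linarith
    have hfv : f (u ζ) α < 0 := by
      have := (Stmt15Aux.f_strictAnti hα) hr0 (le_of_lt (lt_of_le_of_lt hr0 hvr)) hvr
      simpa [hrz] using this
    rw [h2deriv ζ]
    apply div_neg_of_neg_of_pos _ (pow_pos (hGpos ζ) 2)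
    have hnum : G'' ζ * G ζ - G' ζ * G' ζ =
        ((d : ℝ) * c) ^ 2 * (u ζ * Real.exp (-(u ζ) ^ 2 / 2)) * f (u ζ) α := by
      rw [hGeq]
      show (d : ℝ) * c * (Real.exp (-(u ζ) ^ 2 / 2) * u ζ) * (1 - (u ζ) ^ 2) *
          (1 + (d : ℝ) * (c * Stmt15Aux.I (u ζ))) -
          (d : ℝ) * (c * (Real.exp (-(u ζ) ^ 2 / 2) * u ζ)) *
          ((d : ℝ) * (c * (Real.exp (-(u ζ) ^ 2 / 2) * u ζ))) =
          ((d : ℝ) * c) ^ 2 * (u ζ * Real.exp (-(u ζ) ^ 2 / 2)) *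
          ((1 - (u ζ) ^ 2) * (α + Stmt15Aux.I (u ζ)) - u ζ * Real.exp (-(u ζ) ^ 2 / 2))
      exact Stmt15Aux.alg (d : ℝ) c α (Real.exp (-(u ζ) ^ 2 / 2)) (u ζ)
        (Stmt15Aux.I (u ζ)) hdcα
    rw [hnum]
    have hpos : 0 < ((d : ℝ) * c) ^ 2 * (u ζ * Real.exp (-(u ζ) ^ 2 / 2)) := by positivity
    exact mul_neg_of_pos_of_neg hpos hfv
  refine ⟨key, ?_⟩
  apply strictConcaveOn_of_deriv2_neg (convex_Ioi _)
  · exact (Differentiable.continuous fun ζ => (hF ζ).differentiableAt).continuousOn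
  · intro x hx
    rw [interior_Ioi] at hx
    have := key x hx
    simpa [Function.iterate_succ, Function.iterate_zero, Function.comp] using this
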